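/- Identify ℝⁿ with ℝ^{m₁} × ⋯ × ℝ^{m_d} (d ≥ 2, m₁ + ⋯ + m_d = n) and write x = (x₁,…,x_d); let ∇_l f(x) ∈ ℝ^{m_l} be the gradient of f with respect to the l-th block. Let f : ℝⁿ → ℝ be C² and strictly convex with unique minimum point x*, let x₀ ∈ ℝⁿ, t₀ = f(x₀), and suppose all eigenvalues of the Hessian H(f)(y) lie in [α, β] (0 < α ≤ β) for every y ∈ V(t₀) = {y : f(y) ≤ t₀}; set κ = β/α. Suppose j ∈ [d] satisfies ‖∇_j f(x₀)‖ = max_{l ∈ [d]} ‖∇_l f(x₀)‖, and let x₁ be obtained from x₀ by replacing the j-th block by the (unique) minimizer of x_j ↦ f(x₀^j, x_j) with the other blocks fixed. Then f(x₁) − f(x*) ≤ (f(x₀) − f(x*))·(1 − 1/(dκ)). -/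

import Mathlib

open Set

section Aux
variable {E : Type*} [NormedAddCommGroup E] [InnerProductSpace ℝ E]

lemma pm_line_deriv1 {f : E → ℝ} (hf : Differentiable ℝ f) (x v : E) (t : ℝ) :
    HasDerivAt (fun s : ℝ => f (x + s • v)) (fderiv ℝ f (x + t • v) v) t := by
  have h1 : HasDerivAt (fun s : ℝ => x + s • v) v t := by
    simpa using ((hasDerivAt_id t).smul_const v).const_add x
  exact (hf (x + t • v)).hasFDerivAt.comp_hasDerivAt t h1

lemma pm_line_deriv2 {f : E → ℝ} (hf : ContDiff ℝ 2 f) (x v : E) (t : ℝ) :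
    HasDerivAt (fun s : ℝ => fderiv ℝ f (x + s • v) v)
      (iteratedFDeriv ℝ 2 f (x + t • v) ![v, v]) t := by
  have hd : Differentiable ℝ (fderiv ℝ f) :=
    (hf.fderiv_right (by norm_num) : ContDiff ℝ 1 (fderiv ℝ f)).differentiable one_ne_zero
  have h1 : HasDerivAt (fun s : ℝ => x + s • v) v t := by
    simpa using ((hasDerivAt_id t).smul_const v).const_add x
  have h3 := ((hd (x + t • v)).hasFDerivAt).comp_hasDerivAt t h1
  have h4 := (ContinuousLinearMap.apply ℝ ℝ v).hasFDerivAt.comp_hasDerivAt t h3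
  have : iteratedFDeriv ℝ 2 f (x + t • v) ![v, v]
      = fderiv ℝ (fderiv ℝ f) (x + t • v) v v := by
    rw [iteratedFDeriv_two_apply]; rfl
  rw [this]
  exact h4

lemma pm_taylor_upper {f : E → ℝ} (hf : ContDiff ℝ 2 f) (x v : E) {C t : ℝ} (ht : 0 ≤ t)
    (hC : ∀ s ∈ Set.Icc (0:ℝ) t, iteratedFDeriv ℝ 2 f (x + s • v) ![v, v] ≤ C) :
    f (x + t • v) ≤ f x + t * fderiv ℝ f x v + C * t ^ 2 / 2 := by
  have hdf : Differentiable ℝ f := hf.differentiable two_ne_zero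
  set D0 : ℝ := fderiv ℝ f x v with hD0
  have hD0' : fderiv ℝ f (x + (0:ℝ) • v) v = D0 := by simp [hD0]
  set g1 : ℝ → ℝ := fun s => fderiv ℝ f (x + s • v) v - C * s with hg1
  have hg1d : ∀ s, HasDerivAt g1 (iteratedFDeriv ℝ 2 f (x + s • v) ![v, v] - C) s := by
    intro s
    have h := (pm_line_deriv2 hf x v s).sub ((hasDerivAt_id s).const_mul C)
    simp only [mul_one] at h
    exact h
  have h1 : AntitoneOn g1 (Set.Icc 0 t) := by
    apply antitoneOn_of_deriv_nonpos (convex_Icc 0 t)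
    · exact (Differentiable.continuous fun s => (hg1d s).differentiableAt).continuousOn
    · exact fun s _ => (hg1d s).differentiableAt.differentiableWithinAt
    · intro s hs
      rw [interior_Icc] at hs
      rw [(hg1d s).deriv]
      have := hC s (Ioo_subset_Icc_self hs)
      linarith
  have hstage1 : ∀ s ∈ Set.Icc (0:ℝ) t, fderiv ℝ f (x + s • v) v ≤ D0 + C * s := by
    intro s hs
    have := h1 (left_mem_Icc.2 ht) hs hs.1
    simp only [hg1, mul_zero, sub_zero, hD0'] at this
    linarith
  set g2 : ℝ → ℝ := fun s => f (x + s • v) - s * D0 - C * s ^ 2 / 2 with hg2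
  have hg2d : ∀ s, HasDerivAt g2 (fderiv ℝ f (x + s • v) v - D0 - C * s) s := by
    intro s
    have h := ((pm_line_deriv1 hdf x v s).sub ((hasDerivAt_id s).mul_const D0)).sub
      ((((hasDerivAt_pow 2 s)).const_mul C).div_const 2)
    refine h.congr_deriv ?_
    ring
  have h2 : AntitoneOn g2 (Set.Icc 0 t) := by
    apply antitoneOn_of_deriv_nonpos (convex_Icc 0 t)
    · exact (Differentiable.continuous fun s => (hg2d s).differentiableAt).continuousOn
    · exact fun s _ => (hg2d s).differentiableAt.differentiableWithinAt
    · intro s hs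
      rw [interior_Icc] at hs
      rw [(hg2d s).deriv]
      have := hstage1 s (Ioo_subset_Icc_self hs)
      linarith
  have := h2 (left_mem_Icc.2 ht) (right_mem_Icc.2 ht) ht
  simp only [hg2, zero_smul, add_zero, mul_zero, zero_mul, sub_zero, zero_pow, ne_eq,
    OfNat.ofNat_ne_zero, not_false_eq_true, zero_div] at this
  linarith

lemma pm_taylor_lower {f : E → ℝ} (hf : ContDiff ℝ 2 f) (x v : E) {c t : ℝ} (ht : 0 ≤ t)
    (hc : ∀ s ∈ Set.Icc (0:ℝ) t, c ≤ iteratedFDeriv ℝ 2 f (x + s • v) ![v, v]) :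
    f x + t * fderiv ℝ f x v + c * t ^ 2 / 2 ≤ f (x + t • v) := by
  have hdf : Differentiable ℝ f := hf.differentiable two_ne_zero
  set D0 : ℝ := fderiv ℝ f x v with hD0
  have hD0' : fderiv ℝ f (x + (0:ℝ) • v) v = D0 := by simp [hD0]
  set g1 : ℝ → ℝ := fun s => fderiv ℝ f (x + s • v) v - c * s with hg1
  have hg1d : ∀ s, HasDerivAt g1 (iteratedFDeriv ℝ 2 f (x + s • v) ![v, v] - c) s := by
    intro s
    have h := (pm_line_deriv2 hf x v s).sub ((hasDerivAt_id s).const_mul c)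
    simp only [mul_one] at h
    exact h
  have h1 : MonotoneOn g1 (Set.Icc 0 t) := by
    apply monotoneOn_of_deriv_nonneg (convex_Icc 0 t)
    · exact (Differentiable.continuous fun s => (hg1d s).differentiableAt).continuousOn
    · exact fun s _ => (hg1d s).differentiableAt.differentiableWithinAt
    · intro s hs
      rw [interior_Icc] at hs
      rw [(hg1d s).deriv]
      have := hc s (Ioo_subset_Icc_self hs)
      linarith
  have hstage1 : ∀ s ∈ Set.Icc (0:ℝ) t, D0 + c * s ≤ fderiv ℝ f (x + s • v) v := by
    intro s hs
    have := h1 (left_mem_Icc.2 ht) hs hs.1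
    simp only [hg1, mul_zero, sub_zero, hD0'] at this
    linarith
  set g2 : ℝ → ℝ := fun s => f (x + s • v) - s * D0 - c * s ^ 2 / 2 with hg2
  have hg2d : ∀ s, HasDerivAt g2 (fderiv ℝ f (x + s • v) v - D0 - c * s) s := by
    intro s
    have h := ((pm_line_deriv1 hdf x v s).sub ((hasDerivAt_id s).mul_const D0)).sub
      ((((hasDerivAt_pow 2 s)).const_mul c).div_const 2)
    refine h.congr_deriv ?_
    ring
  have h2 : MonotoneOn g2 (Set.Icc 0 t) := by
    apply monotoneOn_of_deriv_nonneg (convex_Icc 0 t)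
    · exact (Differentiable.continuous fun s => (hg2d s).differentiableAt).continuousOn
    · exact fun s _ => (hg2d s).differentiableAt.differentiableWithinAt
    · intro s hs
      rw [interior_Icc] at hs
      rw [(hg2d s).deriv]
      have := hstage1 s (Ioo_subset_Icc_self hs)
      linarith
  have := h2 (left_mem_Icc.2 ht) (right_mem_Icc.2 ht) ht
  simp only [hg2, zero_smul, add_zero, mul_zero, zero_mul, sub_zero, zero_pow, ne_eq,
    OfNat.ofNat_ne_zero, not_false_eq_true, zero_div] at this
  linarith

lemma pm_line_convex {f : E → ℝ} (hf : ContDiff ℝ 2 f)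
    (hH : ∀ z w : E, 0 ≤ iteratedFDeriv ℝ 2 f z ![w, w]) (x v : E) :
    ConvexOn ℝ Set.univ (fun t : ℝ => f (x + t • v)) := by
  have hdf : Differentiable ℝ f := hf.differentiable two_ne_zero
  have hφ : Differentiable ℝ (fun t : ℝ => f (x + t • v)) :=
    fun t => (pm_line_deriv1 hdf x v t).differentiableAt
  have hder : deriv (fun t : ℝ => f (x + t • v)) = fun t => fderiv ℝ f (x + t • v) v :=
    funext fun t => (pm_line_deriv1 hdf x v t).deriv
  apply convexOn_univ_of_deriv2_nonneg hφ
  · rw [hder]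
    exact fun t => (pm_line_deriv2 hf x v t).differentiableAt
  · intro t
    have : deriv^[2] (fun t : ℝ => f (x + t • v)) t
        = iteratedFDeriv ℝ 2 f (x + t • v) ![v, v] := by
      show deriv (deriv (fun t : ℝ => f (x + t • v))) t = _
      rw [hder]
      exact (pm_line_deriv2 hf x v t).deriv
    rw [this]
    exact hH _ _

end Aux

set_option maxHeartbeats 2000000 in
/-- One step of the partial-minimization algorithm from `x₀`, minimizing
over the block `j` with the largest block gradient, decreases the gap to the minimum by
the factor `1 - 1/(dκ)` with `κ = β/α`. -/
theorem partial_min_first_step {d : ℕ} (hd : 2 ≤ d) {m : Fin d → ℕ} (hm : ∀ i, 1 ≤ m i)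
    (f : PiLp 2 (fun i : Fin d => EuclideanSpace ℝ (Fin (m i))) → ℝ)
    (hf : ContDiff ℝ 2 f)
    (hHess : ∀ x v : PiLp 2 (fun i : Fin d => EuclideanSpace ℝ (Fin (m i))), v ≠ 0 →
      0 < iteratedFDeriv ℝ 2 f x ![v, v])
    (xstar : PiLp 2 (fun i : Fin d => EuclideanSpace ℝ (Fin (m i))))
    (hmin : ∀ y, f xstar ≤ f y)
    (huniq : ∀ y, (∀ z, f y ≤ f z) → y = xstar)
    (x₀ : PiLp 2 (fun i : Fin d => EuclideanSpace ℝ (Fin (m i))))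
    (α β : ℝ) (hα : 0 < α) (hαβ : α ≤ β)
    (hEig : ∀ y, f y ≤ f x₀ → ∀ v : PiLp 2 (fun i : Fin d => EuclideanSpace ℝ (Fin (m i))),
      α * ‖v‖ ^ 2 ≤ iteratedFDeriv ℝ 2 f y ![v, v] ∧
      iteratedFDeriv ℝ 2 f y ![v, v] ≤ β * ‖v‖ ^ 2)
    (j : Fin d)
    (hj : ∀ l : Fin d, ‖gradient f x₀ l‖ ≤ ‖gradient f x₀ j‖)
    (y : EuclideanSpace ℝ (Fin (m j)))
    (hy : ∀ z : EuclideanSpace ℝ (Fin (m j)),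
      f (WithLp.toLp 2 (Function.update x₀ j y)) ≤ f (WithLp.toLp 2 (Function.update x₀ j z))) :
    f (WithLp.toLp 2 (Function.update x₀ j y)) - f xstar ≤
      (f x₀ - f xstar) * (1 - 1 / (d * (β / α))) := by
  classical
  have hβ : (0:ℝ) < β := lt_of_lt_of_le hα hαβ
  have hdf : Differentiable ℝ f := hf.differentiable two_ne_zero
  set g := gradient f x₀ with hg_def
  -- gradient vs fderiv
  have hgrad : ∀ u : PiLp 2 (fun i : Fin d => EuclideanSpace ℝ (Fin (m i))), (inner ℝ g u : ℝ) = fderiv ℝ f x₀ u := fun u =>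
    InnerProductSpace.toDual_symm_apply
  -- Hessian nonnegativity everywhere
  have hH0 : ∀ z w : PiLp 2 (fun i : Fin d => EuclideanSpace ℝ (Fin (m i))), 0 ≤ iteratedFDeriv ℝ 2 f z ![w, w] := by
    intro z w
    by_cases hw : w = 0
    · subst hw
      have : iteratedFDeriv ℝ 2 f z ![(0: PiLp 2 (fun i : Fin d => EuclideanSpace ℝ (Fin (m i)))), 0] = 0 :=
        (iteratedFDeriv ℝ 2 f z).map_coord_zero 0 rfl
      rw [this]
    · exact (hHess z w hw).le
  -- Part (i): f x₀ - f xstar ≤ ‖g‖² / (2α)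
  have h_i : f x₀ - f xstar ≤ ‖g‖ ^ 2 / (2 * α) := by
    set w := xstar - x₀ with hw_def
    have hxw : x₀ + (1:ℝ) • w = xstar := by
      rw [one_smul, hw_def, add_sub_cancel]
    have hconvw := pm_line_convex hf hH0 x₀ w
    have hsegw : ∀ s ∈ Set.Icc (0:ℝ) 1, f (x₀ + s • w) ≤ f x₀ := by
      intro s hs
      have h := hconvw.le_on_segment (Set.mem_univ (0:ℝ)) (Set.mem_univ (1:ℝ))
        (by rw [segment_eq_Icc zero_le_one]; exact hs)
      simp only [zero_smul, add_zero] at h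
      rw [hxw] at h
      exact le_trans h (max_le le_rfl (hmin x₀))
    have hlow := pm_taylor_lower hf x₀ w zero_le_one
      (fun s hs => (hEig _ (hsegw s hs) w).1)
    rw [hxw] at hlow
    have hinner_bd : -(‖g‖ * ‖w‖) ≤ fderiv ℝ f x₀ w := by
      rw [← hgrad w]
      have h1 := abs_real_inner_le_norm g w
      have h2 := neg_abs_le (inner ℝ g w : ℝ)
      linarith
    rw [le_div_iff₀ (by positivity)]
    nlinarith [sq_nonneg (‖g‖ - α * ‖w‖), hα, norm_nonneg w, norm_nonneg g]
  -- trivial bound for x₁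
  have hfx1_le : f (WithLp.toLp 2 (Function.update x₀ j y)) ≤ f x₀ := by
    simpa [Function.update_eq_self] using hy (x₀ j)
  have hA0 : 0 ≤ f x₀ - f xstar := sub_nonneg.2 (hmin x₀)
  have hdd : (2:ℝ) ≤ (d:ℝ) := by exact_mod_cast hd
  have hddpos : (0:ℝ) < (d:ℝ) := by linarith
  set b := ‖g j‖ ^ 2 with hb_def
  have hG2 : ‖g‖ ^ 2 ≤ (d:ℝ) * b := by
    rw [PiLp.norm_sq_eq_of_L2]
    calc (∑ l, ‖g l‖ ^ 2) ≤ ∑ _l : Fin d, b :=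
          Finset.sum_le_sum (fun l _ => by
            rw [hb_def]; exact pow_le_pow_left₀ (norm_nonneg _) (hj l) 2)
      _ = (d:ℝ) * b := by
          simp [Finset.sum_const, Finset.card_univ, nsmul_eq_mul]
  have h5 : (f x₀ - f xstar) * (2 * α) ≤ ‖g‖ ^ 2 := by
    rwa [← le_div_iff₀ (by positivity)]
  by_cases hgj : g j = 0
  · -- degenerate case: the full gradient vanishes
    have hb0 : b = 0 := by simp [hb_def, hgj]
    have h4 : ‖g‖ ^ 2 = 0 := le_antisymm (by rw [hb0] at hG2; simpa using hG2) (sq_nonneg _)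
    rw [h4, zero_div] at h_i
    have heq : f x₀ = f xstar := by linarith
    have : f x₀ - f xstar = 0 := by linarith
    rw [this, zero_mul]
    linarith [hfx1_le]
  · -- main case
    have hbpos : 0 < b := by
      rw [hb_def]; exact pow_pos (norm_pos_iff.2 hgj) 2
    set w0 := -(β⁻¹ • g j) with hw0_def
    set u : PiLp 2 (fun i : Fin d => EuclideanSpace ℝ (Fin (m i))) := WithLp.toLp 2 (Pi.single j w0)
      with hu_def
    have hul : ∀ l, l ≠ j → u l = 0 := by
      intro l hl
      rw [hu_def]
      exact Pi.single_eq_of_ne (M := fun i => EuclideanSpace ℝ (Fin (m i))) hl _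
    have huj : u j = w0 := by
      rw [hu_def]
      exact Pi.single_eq_same (M := fun i => EuclideanSpace ℝ (Fin (m i))) j w0
    have hupdate : ∀ t : ℝ, x₀ + t • u = WithLp.toLp 2 (Function.update x₀ j (x₀ j + t • w0)) := by
      intro t
      refine PiLp.ext fun l => ?_
      by_cases hl : l = j
      · subst hl
        simp [Function.update_self, huj]
      · simp [Function.update_of_ne hl, hul l hl]
    have hfd : fderiv ℝ f x₀ u = -(β⁻¹ * b) := by
      rw [← hgrad u, PiLp.inner_apply,
        Finset.sum_eq_single j
          (fun l _ hl => by rw [hul l hl]; exact inner_zero_right _)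
          (fun h => absurd (Finset.mem_univ j) h),
        huj, hw0_def, inner_neg_right, real_inner_smul_right,
        real_inner_self_eq_norm_sq, hb_def]
    have hnu : ‖u‖ ^ 2 = β⁻¹ ^ 2 * b := by
      rw [PiLp.norm_sq_eq_of_L2,
        Finset.sum_eq_single j
          (fun l _ hl => by rw [hul l hl, norm_zero]; exact zero_pow two_ne_zero)
          (fun h => absurd (Finset.mem_univ j) h),
        huj, hw0_def, norm_neg, norm_smul, Real.norm_eq_abs,
        abs_of_pos (inv_pos.2 hβ), mul_pow, hb_def]
    have hCval : β * ‖u‖ ^ 2 = β⁻¹ * b := by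
      rw [hnu]
      field_simp
    have hβb : 0 < β⁻¹ * b := by positivity
    have hlinecont : Continuous (fun t : ℝ => x₀ + t • u) :=
      continuous_const.add (continuous_id.smul continuous_const)
    have φcont : Continuous (fun t : ℝ => f (x₀ + t • u)) :=
      hf.continuous.comp hlinecont
    set K : Set ℝ := Icc 0 1 ∩ {t | f (x₀ + t • u) ≤ f x₀} with hK_def
    have hK0 : (0:ℝ) ∈ K := ⟨⟨le_refl 0, zero_le_one⟩, by simp⟩
    have hKbdd : BddAbove K := ⟨1, fun t ht => ht.1.2⟩
    have hKclosed : IsClosed K := isClosed_Icc.inter (isClosed_le φcont continuous_const)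
    set T := sSup K with hT_def
    have hTK : T ∈ K := hKclosed.csSup_mem ⟨0, hK0⟩ hKbdd
    clear_value T
    have hconv := pm_line_convex hf hH0 x₀ u
    have hKseg : ∀ t, t ∈ K → ∀ s ∈ Icc (0:ℝ) t, f (x₀ + s • u) ≤ f x₀ := by
      intro t ht s hs
      have h := hconv.le_on_segment (Set.mem_univ (0:ℝ)) (Set.mem_univ t)
        (by rw [segment_eq_Icc ht.1.1]; exact hs)
      simp only [zero_smul, add_zero] at h
      exact le_trans h (max_le le_rfl ht.2)
    have hTaylor : ∀ t, t ∈ K →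
        f (x₀ + t • u) ≤ f x₀ + t * (-(β⁻¹ * b)) + (β⁻¹ * b) * t ^ 2 / 2 := by
      intro t ht
      have h := pm_taylor_upper hf x₀ u ht.1.1 (fun s hs => (hEig _ (hKseg t ht s hs) u).2)
      rw [hfd, hCval] at h
      exact h
    have hT1 : T = 1 := by
      by_contra hne
      have hT_lt : T < 1 := lt_of_le_of_ne hTK.1.2 hne
      rcases eq_or_lt_of_le hTK.1.1 with h0 | hTpos
      · -- T = 0 : the derivative at 0 is negative
        have hφ'cont : Continuous (fun t : ℝ => fderiv ℝ f (x₀ + t • u) u) :=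
          (ContinuousLinearMap.apply ℝ ℝ u).continuous.comp
            ((hf.continuous_fderiv (by norm_num)).comp hlinecont)
        have hval : (fun t : ℝ => fderiv ℝ f (x₀ + t • u) u) 0 < 0 := by
          simp only [zero_smul, add_zero]
          rw [hfd]
          linarith
        have hev : ∀ᶠ t in nhds (0:ℝ), fderiv ℝ f (x₀ + t • u) u < 0 :=
          Filter.Tendsto.eventually_lt_const hval hφ'cont.continuousAt
        rcases Metric.eventually_nhds_iff.mp hev with ⟨δ, hδpos, hδ⟩
        set s₀ := min (δ/2) 1 with hs₀_def
        have hs₀pos : 0 < s₀ := lt_min (by linarith) one_pos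
        have hs₀le1 : s₀ ≤ 1 := min_le_right _ _
        have hanti : StrictAntiOn (fun t : ℝ => f (x₀ + t • u)) (Icc 0 s₀) := by
          apply strictAntiOn_of_deriv_neg (convex_Icc 0 s₀) φcont.continuousOn
          intro t ht
          rw [interior_Icc] at ht
          rw [(pm_line_deriv1 hdf x₀ u t).deriv]
          apply hδ
          rw [Real.dist_eq, sub_zero, abs_of_pos ht.1]
          calc t < s₀ := ht.2
            _ ≤ δ/2 := min_le_left _ _
            _ < δ := by linarith
        have hlt : f (x₀ + s₀ • u) < f x₀ := by
          have h := hanti (left_mem_Icc.2 hs₀pos.le) (right_mem_Icc.2 hs₀pos.le) hs₀pos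
          simpa using h
        have hmem : s₀ ∈ K := ⟨⟨hs₀pos.le, hs₀le1⟩, hlt.le⟩
        have := le_csSup hKbdd hmem
        rw [← hT_def, ← h0] at this
        linarith
      · -- 0 < T < 1 : strict decrease at T, contradiction with sup
        have hφT : f (x₀ + T • u) < f x₀ := by
          have h := hTaylor T hTK
          have hq : (0:ℝ) < T - T^2/2 := by nlinarith
          nlinarith [mul_pos hβb hq]
        have hev : ∀ᶠ t in nhds T, f (x₀ + t • u) < f x₀ :=
          Filter.Tendsto.eventually_lt_const hφT φcont.continuousAt
        rcases Metric.eventually_nhds_iff.mp hev with ⟨δ, hδpos, hδ⟩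
        set t' := min 1 (T + δ/2) with ht'_def
        have hTt' : T < t' := lt_min hT_lt (by linarith)
        have ht'le : t' ≤ T + δ/2 := min_le_right _ _
        have ht'K : t' ∈ K := by
          refine ⟨⟨?_, min_le_left _ _⟩, le_of_lt (hδ ?_)⟩
          · exact le_trans hTK.1.1 hTt'.le
          · rw [Real.dist_eq, abs_lt]
            constructor <;> linarith
        have := le_csSup hKbdd ht'K
        rw [← hT_def] at this
        linarith
    have h1K : (1:ℝ) ∈ K := by rw [← hT1]; exact hTK
    have hstep : f (x₀ + (1:ℝ) • u) ≤ f x₀ - β⁻¹ * b / 2 := by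
      have h := hTaylor 1 h1K
      nlinarith [h]
    have hx1 : f (WithLp.toLp 2 (Function.update x₀ j y)) ≤ f x₀ - β⁻¹ * b / 2 := by
      have h := hy (x₀ j + (1:ℝ) • w0)
      rw [← hupdate 1] at h
      exact le_trans h hstep
    -- final arithmetic
    have hrw : (f x₀ - f xstar) * (1 - 1 / ((d:ℝ) * (β/α)))
        = (f x₀ - f xstar) - (f x₀ - f xstar) * α / ((d:ℝ) * β) := by
      field_simp
    rw [hrw]
    have hkey : (f x₀ - f xstar) * α / ((d:ℝ) * β) ≤ β⁻¹ * b / 2 := by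
      rw [div_le_div_iff₀ (by positivity) (by norm_num)]
      have hq : β⁻¹ * b * ((d:ℝ) * β) = (d:ℝ) * b := by
        field_simp
      rw [hq]
      nlinarith [h5, hG2]
    linarith [hx1, hkey]
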